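/- Let U ⊂ ℂ be an open bounded set and let h : U → ℂ̂ be continuous. Fix w₀ ∈ ℂ. Then for every δ > 0 there exists ε > 0 such that for all w with |w − w₀| < ε, every point of h⁻¹(w) lies within distance δ of the set h⁻¹(w₀) ∪ ∂U; that is, h⁻¹(w) ⊂ B(h⁻¹(w₀) ∪ ∂U; δ). -/

import Mathlib

open Complex Metric Set OnePoint Topology

/-- **Convergence of preimages.** Let `U ⊆ ℂ` be open and bounded and `h : U → ℂ̂` continuous.
For every `w₀ ∈ ℂ` and `δ > 0` there is `ε > 0` such that whenever `|w - w₀| < ε`, every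
preimage of `w` under `h` in `U` lies within distance `δ` of `h⁻¹(w₀) ∪ ∂U`. -/
theorem preimages_near_preimages_or_boundary
    (U : Set ℂ) (hUopen : IsOpen U) (hUbdd : Bornology.IsBounded U)
    (h : ℂ → OnePoint ℂ) (hc : ContinuousOn h U) (w₀ : ℂ) :
    ∀ δ > (0:ℝ), ∃ ε > (0:ℝ), ∀ w : ℂ, ‖w - w₀‖ < ε →
      ∀ z ∈ U, h z = ↑w →
        ∃ y ∈ {x ∈ U | h x = ↑w₀} ∪ frontier U, ‖z - y‖ < δ := by
  intro δ hδ
  by_contra hcon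
  push_neg at hcon
  -- extract sequences
  have hseq : ∀ n : ℕ, ∃ w : ℂ, ‖w - w₀‖ < 1 / (n + 1) ∧
      ∃ z ∈ U, h z = ↑w ∧ ∀ y ∈ {x ∈ U | h x = ↑w₀} ∪ frontier U, δ ≤ ‖z - y‖ := by
    intro n
    obtain ⟨wn, hwn, z, hzU, hz, hy⟩ := hcon (1 / (n + 1)) (by positivity)
    exact ⟨wn, hwn, z, hzU, hz, hy⟩
  choose w hw z hzU hhz hfar using hseq
  -- z n lies in the compact closure of U
  have hcpt : IsCompact (closure U) := hUbdd.isCompact_closure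
  obtain ⟨a, haU, φ, hφ, hlim⟩ := hcpt.tendsto_subseq (fun n => subset_closure (hzU n))
  -- w n → w₀
  have hwlim : Filter.Tendsto w Filter.atTop (nhds w₀) := by
    rw [tendsto_iff_dist_tendsto_zero]
    have h0 : Filter.Tendsto (fun n : ℕ => 1 / ((n : ℝ) + 1)) Filter.atTop (nhds 0) :=
      tendsto_one_div_add_atTop_nhds_zero_nat
    refine squeeze_zero (fun n => dist_nonneg) (fun n => ?_) h0
    rw [Complex.dist_eq]
    exact (hw n).le
  -- the limit point a is in the "good" set
  have ha : a ∈ {x ∈ U | h x = ↑w₀} ∪ frontier U := by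
    by_cases haU' : a ∈ U
    · left
      refine ⟨haU', ?_⟩
      have hcw : ContinuousWithinAt h U a := hc a haU'
      have htend : Filter.Tendsto (fun n => h (z (φ n))) Filter.atTop (nhds (h a)) := by
        apply hcw.tendsto.comp
        exact tendsto_nhdsWithin_of_tendsto_nhds_of_eventually_within _ hlim
          (Filter.Eventually.of_forall (fun n => hzU (φ n)))
      have htend' : Filter.Tendsto (fun n => h (z (φ n))) Filter.atTop
          (nhds ((w₀ : OnePoint ℂ))) := by
        have : Filter.Tendsto (fun n => ((w (φ n) : OnePoint ℂ))) Filter.atTop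
            (nhds ((w₀ : OnePoint ℂ))) :=
          (OnePoint.continuous_coe.tendsto w₀).comp (hwlim.comp hφ.tendsto_atTop)
        simpa [hhz] using this
      exact tendsto_nhds_unique htend htend'
    · right
      rw [frontier_eq_closure_inter_closure]
      exact ⟨haU, subset_closure haU'⟩
  -- contradiction: z (φ n) → a but stays δ-far from a
  have hd : Filter.Tendsto (fun n => ‖z (φ n) - a‖) Filter.atTop (nhds 0) := by
    simpa [Complex.dist_eq] using (tendsto_iff_dist_tendsto_zero.mp hlim)
  have : δ ≤ (0:ℝ) :=
    le_of_tendsto_of_tendsto' tendsto_const_nhds hd (fun n => hfar (φ n) a ha)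
  linarith
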